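/- Let G be a group containing both an element of infinite order and a non-trivial element of finite order, and suppose G is not locally cyclic. Then the non-cyclic graph Γ_G has diameter exactly 2. -/

import Mathlib

/-- `Cyc(G)`. -/
def cycSet (G : Type*) [Group G] : Set G :=
  {y | ∀ x : G, IsCyclic ↥(Subgroup.closure ({x, y} : Set G))}

/-- Adjacency in the non-cyclic graph. -/
def ncAdj {G : Type*} [Group G] (x y : G) : Prop :=
  x ≠ y ∧ ¬ IsCyclic ↥(Subgroup.closure ({x, y} : Set G))

open Subgroup

lemma pairClosureComm {G : Type*} [Group G] (x y : G) :
    Subgroup.closure ({x, y} : Set G) = Subgroup.closure ({y, x} : Set G) := by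
  rw [Set.pair_comm]

lemma isCyclic_zpowers {G : Type*} [Group G] (a : G) :
    IsCyclic ↥(Subgroup.zpowers a) := by
  refine ⟨⟨a, mem_zpowers a⟩, ?_⟩
  rintro ⟨x, n, rfl⟩
  exact ⟨n, by ext; simp⟩

/-- Key lemma: an infinite-order element and a nontrivial finite-order element
never generate a cyclic subgroup. -/
lemma not_isCyclic_closure_pair {G : Type*} [Group G] {a b : G}
    (ha : ¬ IsOfFinOrder a) (hb : IsOfFinOrder b) (hb1 : b ≠ 1) :
    ¬ IsCyclic ↥(Subgroup.closure ({a, b} : Set G)) := by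
  intro hc
  obtain ⟨g, hg⟩ := hc.exists_generator
  have haM : a ∈ closure ({a, b} : Set G) := subset_closure (by simp)
  have hbM : b ∈ closure ({a, b} : Set G) := subset_closure (by simp)
  obtain ⟨m, hm⟩ := hg ⟨a, haM⟩
  obtain ⟨n, hn⟩ := hg ⟨b, hbM⟩
  have hma : (g : G) ^ m = a := by
    have := congrArg (Subtype.val) hm; simpa using this
  have hnb : (g : G) ^ n = b := by
    have := congrArg (Subtype.val) hn; simpa using this
  have hgo : ¬ IsOfFinOrder (g : G) := by
    intro h
    exact ha (hma ▸ h.zpow)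
  have hinj : Function.Injective fun k : ℤ => (g : G) ^ k :=
    injective_zpow_iff_not_isOfFinOrder.mpr hgo
  have hk : 0 < orderOf b := hb.orderOf_pos
  have h1 : (g : G) ^ (n * (orderOf b : ℤ)) = (g : G) ^ (0 : ℤ) := by
    rw [zpow_mul, hnb, zpow_natCast, pow_orderOf_eq_one, zpow_zero]
  have h2 : n * (orderOf b : ℤ) = 0 := hinj h1
  have hn0 : n = 0 := by
    rcases mul_eq_zero.mp h2 with h | h
    · exact h
    · exact absurd h (by exact_mod_cast hk.ne')
  apply hb1
  rw [← hnb, hn0, zpow_zero]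

lemma notMemCycSet_of_infinite {G : Type*} [Group G] {a b : G}
    (ha : ¬ IsOfFinOrder a) (hb : IsOfFinOrder b) (hb1 : b ≠ 1) :
    a ∉ cycSet G := by
  intro h
  exact not_isCyclic_closure_pair ha hb hb1 (pairClosureComm b a ▸ h b)

lemma notMemCycSet_of_finite {G : Type*} [Group G] {a b : G}
    (ha : ¬ IsOfFinOrder a) (hb : IsOfFinOrder b) (hb1 : b ≠ 1) :
    b ∉ cycSet G := by
  intro h
  exact not_isCyclic_closure_pair ha hb hb1 (h a)

/-- If `G` is neither torsion nor torsion-free and not locally cyclic, then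
the non-cyclic graph of `G` has diameter exactly 2. -/
theorem noncyclic_graph_diam_two_of_mixed {G : Type*} [Group G]
    (hx : ∃ x : G, ¬ IsOfFinOrder x) (hy : ∃ y : G, y ≠ 1 ∧ IsOfFinOrder y)
    (hG : ∃ S : Finset G, ¬ IsCyclic ↥(Subgroup.closure (S : Set G))) :
    (∀ x y : G, x ∉ cycSet G → y ∉ cycSet G → x ≠ y →
      ncAdj x y ∨ ∃ z, z ∉ cycSet G ∧ ncAdj x z ∧ ncAdj y z) ∧
    (∃ x y : G, x ∉ cycSet G ∧ y ∉ cycSet G ∧ x ≠ y ∧ ¬ ncAdj x y) := by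
  obtain ⟨a, ha⟩ := hx
  obtain ⟨b, hb1, hb⟩ := hy
  have hne1 : ∀ x : G, x ∉ cycSet G → x ≠ 1 := by
    rintro x hx rfl
    apply hx
    intro w
    have : Subgroup.closure ({w, 1} : Set G) = Subgroup.zpowers w := by
      rw [zpowers_eq_closure]
      apply le_antisymm
      · rw [closure_le]
        rintro x (rfl | rfl)
        · exact subset_closure rfl
        · exact one_mem _
      · exact closure_mono (by simp)
    rw [this]
    exact _root_.isCyclic_zpowers w
  constructor
  · intro x y hxC hyC hxy
    by_cases hxo : IsOfFinOrder x <;> by_cases hyo : IsOfFinOrder y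
    · -- both finite order: go through a
      right
      refine ⟨a, notMemCycSet_of_infinite ha hxo (hne1 x hxC), ?_, ?_⟩
      · exact ⟨fun h => ha (h ▸ hxo), pairClosureComm a x ▸
          not_isCyclic_closure_pair ha hxo (hne1 x hxC)⟩
      · exact ⟨fun h => ha (h ▸ hyo), pairClosureComm a y ▸
          not_isCyclic_closure_pair ha hyo (hne1 y hyC)⟩
    · -- x finite, y infinite: adjacent
      left
      exact ⟨hxy, pairClosureComm y x ▸
        not_isCyclic_closure_pair hyo hxo (hne1 x hxC)⟩
    · -- x infinite, y finite: adjacent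
      left
      exact ⟨hxy, not_isCyclic_closure_pair hxo hyo (hne1 y hyC)⟩
    · -- both infinite: go through b
      right
      refine ⟨b, notMemCycSet_of_finite hxo hb hb1, ?_, ?_⟩
      · exact ⟨fun h => hxo (h ▸ hb), not_isCyclic_closure_pair hxo hb hb1⟩
      · exact ⟨fun h => hyo (h ▸ hb), not_isCyclic_closure_pair hyo hb hb1⟩
  · -- a and a⁻¹ are distinct non-central vertices generating a cyclic subgroup
    have hai : ¬ IsOfFinOrder a⁻¹ := fun h => ha (isOfFinOrder_inv_iff.mp h)
    have haa : a ≠ a⁻¹ := by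
      intro h
      apply ha
      have : a ^ 2 = 1 := by
        rw [pow_two]; nth_rewrite 2 [h]; simp
      exact isOfFinOrder_iff_pow_eq_one.mpr ⟨2, two_pos, this⟩
    refine ⟨a, a⁻¹, notMemCycSet_of_infinite ha hb hb1,
      notMemCycSet_of_infinite hai hb hb1, haa, ?_⟩
    rintro ⟨-, hnc⟩
    apply hnc
    have : Subgroup.closure ({a, a⁻¹} : Set G) = Subgroup.zpowers a := by
      apply le_antisymm
      · rw [closure_le]
        intro z hz
        rcases hz with h | h <;> rw [h]
        · exact mem_zpowers a
        · exact inv_mem (mem_zpowers a)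
      · rw [zpowers_eq_closure]
        exact closure_mono (by simp)
    rw [this]
    exact _root_.isCyclic_zpowers a
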